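/- For every natural number n ≥ 1 there exists a constant C > 0, depending only on n, with the following property: let N be a natural number, τ ≥ 0, and for k = 1, …, N let A_k be a real n×n matrix with trace A_k = 0 and operator norm ‖A_k‖ ≤ L_k, where τ·L_k ≤ 1. Then ∏_{k=1}^N det(I + τ·A_k) ≤ exp(C·τ²·Σ_{k=1}^N L_k²). If moreover C·τ²·L_k² ≤ 1/2 for every k, then also ∏_{k=1}^N det(I + τ·A_k) ≥ exp(−2C·τ²·Σ_{k=1}^N L_k²). -/

import Mathlib

open scoped BigOperators

set_option synthInstance.maxHeartbeats 1000000
set_option maxHeartbeats 1000000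

lemma entry_abs_le_opNorm {n : ℕ} (A : Matrix (Fin n) (Fin n) ℝ) (i j : Fin n) :
    |A i j| ≤ ‖Matrix.toEuclideanCLM (𝕜 := ℝ) A‖ := by
  set T := Matrix.toEuclideanCLM (𝕜 := ℝ) A with hT
  have h1 : T (EuclideanSpace.single j 1) =
      (WithLp.equiv 2 (Fin n → ℝ)).symm (A.mulVec (Pi.single j 1)) := by
    rw [EuclideanSpace.single, hT]
    rfl
  have hmv : A.mulVec (Pi.single j 1) = fun i => A i j := by
    ext i; simp [Matrix.mulVec_single]
  have hcoord : |A i j| ≤ ‖T (EuclideanSpace.single j 1)‖ := by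
    have h2 : A i j = inner ℝ (EuclideanSpace.single i (1:ℝ)) (T (EuclideanSpace.single j 1)) := by
      rw [EuclideanSpace.inner_single_left, h1, hmv]
      simp
    rw [h2]
    calc |inner ℝ (EuclideanSpace.single i (1:ℝ)) (T (EuclideanSpace.single j 1))|
        ≤ ‖EuclideanSpace.single i (1:ℝ)‖ * ‖T (EuclideanSpace.single j 1)‖ :=
          abs_real_inner_le_norm _ _
      _ = ‖T (EuclideanSpace.single j 1)‖ := by
          rw [EuclideanSpace.norm_single]; simp
  calc |A i j| ≤ ‖T (EuclideanSpace.single j 1)‖ := hcoord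
    _ ≤ ‖T‖ * ‖EuclideanSpace.single j (1:ℝ)‖ := ContinuousLinearMap.le_opNorm T _
    _ = ‖T‖ := by rw [EuclideanSpace.norm_single]; simp

lemma prod_one_add_est {ι : Type*} [DecidableEq ι] (s : Finset ι) (x : ι → ℝ) (b : ℝ)
    (hb0 : 0 ≤ b) (hb1 : b ≤ 1) (hx : ∀ i ∈ s, |x i| ≤ b) :
    |∏ i ∈ s, (1 + x i) - 1 - ∑ i ∈ s, x i| ≤ ((2:ℝ) ^ s.card - 1) * s.card * b ^ 2 := by
  induction s using Finset.induction_on with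
  | empty => simp
  | @insert a s ha ih =>
    have hxs : ∀ i ∈ s, |x i| ≤ b := fun i hi => hx i (Finset.mem_insert_of_mem hi)
    have hxa : |x a| ≤ b := hx a (Finset.mem_insert_self a s)
    have ihs := ih hxs
    have hsum : |∑ i ∈ s, x i| ≤ s.card * b := by
      calc |∑ i ∈ s, x i| ≤ ∑ i ∈ s, |x i| := Finset.abs_sum_le_sum_abs _ _
        _ ≤ ∑ i ∈ s, b := Finset.sum_le_sum hxs
        _ = s.card * b := by rw [Finset.sum_const, nsmul_eq_mul]
    rw [Finset.prod_insert ha, Finset.sum_insert ha]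
    have key : (1 + x a) * ∏ i ∈ s, (1 + x i) - 1 - (x a + ∑ i ∈ s, x i)
        = (1 + x a) * (∏ i ∈ s, (1 + x i) - 1 - ∑ i ∈ s, x i) + x a * ∑ i ∈ s, x i := by
      ring
    rw [key, Finset.card_insert_of_notMem ha]
    have h1a : |1 + x a| ≤ 2 := by
      calc |1 + x a| ≤ |(1:ℝ)| + |x a| := abs_add_le _ _
        _ ≤ 1 + b := by rw [abs_one]; linarith
        _ ≤ 2 := by linarith
    have habs : |(1 + x a) * (∏ i ∈ s, (1 + x i) - 1 - ∑ i ∈ s, x i) + x a * ∑ i ∈ s, x i|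
        ≤ 2 * (((2:ℝ) ^ s.card - 1) * s.card * b ^ 2) + b * (s.card * b) := by
      calc |(1 + x a) * (∏ i ∈ s, (1 + x i) - 1 - ∑ i ∈ s, x i) + x a * ∑ i ∈ s, x i|
          ≤ |(1 + x a)| * |∏ i ∈ s, (1 + x i) - 1 - ∑ i ∈ s, x i| + |x a| * |∑ i ∈ s, x i| := by
            calc _ ≤ |(1 + x a) * (∏ i ∈ s, (1 + x i) - 1 - ∑ i ∈ s, x i)| + |x a * ∑ i ∈ s, x i| :=
                  abs_add_le _ _
              _ = _ := by rw [abs_mul, abs_mul]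
        _ ≤ 2 * (((2:ℝ) ^ s.card - 1) * s.card * b ^ 2) + b * (s.card * b) := by
            gcongr <;> positivity
    refine habs.trans ?_
    have h2 : (1:ℝ) ≤ 2 ^ s.card := one_le_pow₀ (by norm_num : (1:ℝ) ≤ 2)
    have hb2 : b * (s.card * b) = s.card * b ^ 2 := by ring
    rw [hb2]
    have hp : (2:ℝ) ^ (s.card + 1) = 2 * 2 ^ s.card := by rw [pow_succ]; ring
    have hc0 : (0:ℝ) ≤ (s.card : ℝ) := Nat.cast_nonneg _
    push_cast
    nlinarith [sq_nonneg b, mul_nonneg hc0 (sq_nonneg b)]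

lemma det_one_add_est {n : ℕ} (B : Matrix (Fin n) (Fin n) ℝ) (htr : B.trace = 0)
    (b : ℝ) (hb0 : 0 ≤ b) (hb1 : b ≤ 1) (hB : ∀ i j, |B i j| ≤ b) :
    |(1 + B).det - 1| ≤ ((n : ℝ) + n.factorial) * 2 ^ n * b ^ 2 := by
  classical
  rw [Matrix.det_apply]
  have hsplit : ∑ σ : Equiv.Perm (Fin n), Equiv.Perm.sign σ • ∏ i, (1 + B) (σ i) i
      = (∏ i, (1 + B) i i) +
        ∑ σ ∈ Finset.univ.erase (1 : Equiv.Perm (Fin n)),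
          Equiv.Perm.sign σ • ∏ i, (1 + B) (σ i) i := by
    rw [← Finset.add_sum_erase _ _ (Finset.mem_univ (1 : Equiv.Perm (Fin n)))]
    simp
  rw [hsplit]
  have hdiag : ∀ i : Fin n, (1 + B) i i = 1 + B i i := by
    intro i; simp [Matrix.add_apply, Matrix.one_apply_eq]
  have htr' : ∑ i, B i i = 0 := htr
  have hid : |(∏ i, (1 + B) i i) - 1| ≤ ((2:ℝ) ^ n - 1) * n * b ^ 2 := by
    have h := prod_one_add_est Finset.univ (fun i => B i i) b hb0 hb1 (fun i _ => hB i i)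
    simp only [Finset.card_univ, Fintype.card_fin] at h
    calc |(∏ i, (1 + B) i i) - 1|
        = |(∏ i, (1 + B i i)) - 1 - ∑ i, B i i| := by
          rw [htr', sub_zero]
          congr 2
          exact Finset.prod_congr rfl (fun i _ => hdiag i)
      _ ≤ _ := h
  have hterm : ∀ σ ∈ Finset.univ.erase (1 : Equiv.Perm (Fin n)),
      |Equiv.Perm.sign σ • ∏ i, (1 + B) (σ i) i| ≤ 2 ^ n * b ^ 2 := by
    intro σ hσ
    have hσ1 : σ ≠ 1 := (Finset.mem_erase.mp hσ).1
    have habs : |Equiv.Perm.sign σ • ∏ i, (1 + B) (σ i) i| = |∏ i, (1 + B) (σ i) i| := by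
      rcases Int.units_eq_one_or (Equiv.Perm.sign σ) with h | h <;> simp [h]
    rw [habs]
    have hfac : ∀ i : Fin n, |(1 + B) (σ i) i| ≤ if σ i = i then 2 else b := by
      intro i
      by_cases h : σ i = i
      · simp only [h, if_pos]
        rw [hdiag i]
        calc |1 + B i i| ≤ |(1:ℝ)| + |B i i| := abs_add_le _ _
          _ ≤ 1 + b := by rw [abs_one]; linarith [hB i i]
          _ ≤ 2 := by linarith
      · simp only [h, if_neg, not_false_iff]
        have he : (1 + B) (σ i) i = B (σ i) i := by
          simp [Matrix.add_apply, Matrix.one_apply_ne h]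
        rw [he]; exact hB (σ i) i
    have hsupp : 2 ≤ σ.support.card := Equiv.Perm.one_lt_card_support_of_ne_one hσ1
    calc |∏ i, (1 + B) (σ i) i| = ∏ i, |(1 + B) (σ i) i| := by rw [Finset.abs_prod]
      _ ≤ ∏ i, (if σ i = i then 2 else b) :=
          Finset.prod_le_prod (fun i _ => abs_nonneg _) (fun i _ => hfac i)
      _ = (∏ i ∈ σ.support, (if σ i = i then 2 else b)) *
          ∏ i ∈ σ.supportᶜ, (if σ i = i then 2 else b) :=
          (Finset.prod_mul_prod_compl _ _).symm
      _ = b ^ σ.support.card * 2 ^ σ.supportᶜ.card := by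
          rw [Finset.prod_congr rfl (fun i hi => if_neg (Equiv.Perm.mem_support.mp hi)),
            Finset.prod_congr rfl
              (fun i hi => if_pos (Equiv.Perm.notMem_support.mp (Finset.mem_compl.mp hi))),
            Finset.prod_const, Finset.prod_const]
      _ ≤ b ^ 2 * 2 ^ n := by
          have hcardc : σ.supportᶜ.card ≤ n := (Finset.card_le_univ _).trans (by simp)
          exact mul_le_mul (pow_le_pow_of_le_one hb0 hb1 hsupp)
            (pow_le_pow_right₀ (by norm_num) hcardc) (by positivity) (sq_nonneg b)
      _ = 2 ^ n * b ^ 2 := by ring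
  have hsum : |∑ σ ∈ Finset.univ.erase (1 : Equiv.Perm (Fin n)),
      Equiv.Perm.sign σ • ∏ i, (1 + B) (σ i) i| ≤ (n.factorial : ℝ) * (2 ^ n * b ^ 2) := by
    calc |∑ σ ∈ Finset.univ.erase (1 : Equiv.Perm (Fin n)),
        Equiv.Perm.sign σ • ∏ i, (1 + B) (σ i) i|
        ≤ ∑ σ ∈ Finset.univ.erase (1 : Equiv.Perm (Fin n)),
          |Equiv.Perm.sign σ • ∏ i, (1 + B) (σ i) i| := Finset.abs_sum_le_sum_abs _ _
      _ ≤ ∑ _σ ∈ Finset.univ.erase (1 : Equiv.Perm (Fin n)), (2:ℝ) ^ n * b ^ 2 :=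
          Finset.sum_le_sum hterm
      _ = ((Finset.univ.erase (1 : Equiv.Perm (Fin n))).card : ℝ) * (2 ^ n * b ^ 2) := by
          rw [Finset.sum_const, nsmul_eq_mul]
      _ ≤ (n.factorial : ℝ) * (2 ^ n * b ^ 2) := by
          have hcard : ((Finset.univ.erase (1 : Equiv.Perm (Fin n))).card : ℝ)
              ≤ (n.factorial : ℝ) := by
            have h1 : (Finset.univ.erase (1 : Equiv.Perm (Fin n))).card ≤
                Fintype.card (Equiv.Perm (Fin n)) :=
              le_trans (Finset.card_erase_le) (by simp)
            have h2 : Fintype.card (Equiv.Perm (Fin n)) = n.factorial := by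
              simp [Fintype.card_perm]
            exact_mod_cast h2 ▸ h1
          exact mul_le_mul_of_nonneg_right hcard (by positivity)
  have h2n : (1:ℝ) ≤ 2 ^ n := one_le_pow₀ (by norm_num : (1:ℝ) ≤ 2)
  have hn0 : (0:ℝ) ≤ (n:ℝ) := Nat.cast_nonneg _
  have hb2 : (0:ℝ) ≤ b ^ 2 := sq_nonneg b
  calc |(∏ i, (1 + B) i i) + (∑ σ ∈ Finset.univ.erase (1 : Equiv.Perm (Fin n)),
        Equiv.Perm.sign σ • ∏ i, (1 + B) (σ i) i) - 1|
      ≤ |(∏ i, (1 + B) i i) - 1| + |∑ σ ∈ Finset.univ.erase (1 : Equiv.Perm (Fin n)),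
        Equiv.Perm.sign σ • ∏ i, (1 + B) (σ i) i| := by
        have h : (∏ i, (1 + B) i i) + (∑ σ ∈ Finset.univ.erase (1 : Equiv.Perm (Fin n)),
            Equiv.Perm.sign σ • ∏ i, (1 + B) (σ i) i) - 1
            = ((∏ i, (1 + B) i i) - 1) + ∑ σ ∈ Finset.univ.erase (1 : Equiv.Perm (Fin n)),
            Equiv.Perm.sign σ • ∏ i, (1 + B) (σ i) i := by ring
        rw [h]; exact abs_add_le _ _
    _ ≤ ((2:ℝ) ^ n - 1) * n * b ^ 2 + (n.factorial : ℝ) * (2 ^ n * b ^ 2) :=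
        add_le_add hid hsum
    _ ≤ ((n : ℝ) + n.factorial) * 2 ^ n * b ^ 2 := by nlinarith [mul_nonneg hn0 hb2]

lemma exp_neg_two_le_one_sub {c : ℝ} (h0 : 0 ≤ c) (h2 : c ≤ 1/2) :
    Real.exp (-(2*c)) ≤ 1 - c := by
  have he : 1 + 2*c ≤ Real.exp (2*c) := by
    have := Real.add_one_le_exp (2*c); linarith
  have hkey : Real.exp (-(2*c)) * Real.exp (2*c) = 1 := by
    rw [← Real.exp_add]; ring_nf; exact Real.exp_zero
  nlinarith [Real.exp_pos (2*c), Real.exp_pos (-(2*c))]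

/-- Quantitative bound for the Jacobian determinant of composed discrete flow maps
of trace-free (divergence-free) velocity gradients. -/
theorem prod_det_one_add_smul_tracefree_estimate (n : ℕ) (hn : 1 ≤ n) :
    ∃ C > 0, ∀ (N : ℕ) (τ : ℝ), 0 ≤ τ →
      ∀ (A : ℕ → Matrix (Fin n) (Fin n) ℝ) (L : ℕ → ℝ),
      (∀ k, 1 ≤ k → k ≤ N → (A k).trace = 0) →
      (∀ k, 1 ≤ k → k ≤ N → ‖Matrix.toEuclideanCLM (𝕜 := ℝ) (A k)‖ ≤ L k) →
      (∀ k, 1 ≤ k → k ≤ N → τ * L k ≤ 1) →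
      ((∏ k ∈ Finset.Icc 1 N, (1 + τ • A k).det) ≤
          Real.exp (C * τ ^ 2 * ∑ k ∈ Finset.Icc 1 N, L k ^ 2)) ∧
      ((∀ k, 1 ≤ k → k ≤ N → C * τ ^ 2 * L k ^ 2 ≤ 1 / 2) →
        Real.exp (-(2 * C) * τ ^ 2 * ∑ k ∈ Finset.Icc 1 N, L k ^ 2) ≤
          ∏ k ∈ Finset.Icc 1 N, (1 + τ • A k).det) := by
  classical
  set C : ℝ := ((n : ℝ) + n.factorial) * 2 ^ n with hC
  have hfac1 : (1:ℝ) ≤ (n.factorial : ℝ) := by exact_mod_cast n.factorial_pos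
  have hCpos : 0 < C := by
    have : (0:ℝ) < (n : ℝ) + n.factorial := by positivity
    positivity
  refine ⟨C, hCpos, ?_⟩
  intro N τ hτ A L htr hL hτL
  -- key per-factor estimate
  have hkey : ∀ k ∈ Finset.Icc 1 N, |(1 + τ • A k).det - 1| ≤ C * τ ^ 2 * L k ^ 2 := by
    intro k hk
    obtain ⟨hk1, hkN⟩ := Finset.mem_Icc.mp hk
    have hLk0 : 0 ≤ L k := le_trans (norm_nonneg _) (hL k hk1 hkN)
    have hb0 : 0 ≤ τ * L k := mul_nonneg hτ hLk0
    have hb1 : τ * L k ≤ 1 := hτL k hk1 hkN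
    have htrk : (τ • A k).trace = 0 := by
      rw [Matrix.trace_smul, htr k hk1 hkN, smul_zero]
    have hent : ∀ i j, |(τ • A k) i j| ≤ τ * L k := by
      intro i j
      have : (τ • A k) i j = τ * A k i j := rfl
      rw [this, abs_mul, abs_of_nonneg hτ]
      exact mul_le_mul_of_nonneg_left
        ((entry_abs_le_opNorm (A k) i j).trans (hL k hk1 hkN)) hτ
    have h := det_one_add_est (τ • A k) htrk (τ * L k) hb0 hb1 hent
    calc |(1 + τ • A k).det - 1| ≤ C * (τ * L k) ^ 2 := h
      _ = C * τ ^ 2 * L k ^ 2 := by ring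
  constructor
  · -- upper bound
    calc (∏ k ∈ Finset.Icc 1 N, (1 + τ • A k).det)
        ≤ |∏ k ∈ Finset.Icc 1 N, (1 + τ • A k).det| := le_abs_self _
      _ = ∏ k ∈ Finset.Icc 1 N, |(1 + τ • A k).det| := Finset.abs_prod _ _
      _ ≤ ∏ k ∈ Finset.Icc 1 N, Real.exp (C * τ ^ 2 * L k ^ 2) := by
          refine Finset.prod_le_prod (fun k _ => abs_nonneg _) (fun k hk => ?_)
          calc |(1 + τ • A k).det| ≤ |(1 + τ • A k).det - 1| + 1 := by
                have := abs_add_le ((1 + τ • A k).det - 1) 1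
                simpa using this
            _ ≤ C * τ ^ 2 * L k ^ 2 + 1 := by linarith [hkey k hk]
            _ ≤ Real.exp (C * τ ^ 2 * L k ^ 2) := by
                have := Real.add_one_le_exp (C * τ ^ 2 * L k ^ 2); linarith
      _ = Real.exp (∑ k ∈ Finset.Icc 1 N, C * τ ^ 2 * L k ^ 2) := (Real.exp_sum _ _).symm
      _ = Real.exp (C * τ ^ 2 * ∑ k ∈ Finset.Icc 1 N, L k ^ 2) := by
          rw [← Finset.mul_sum]
  · -- lower bound
    intro hhalf
    have hlow : ∀ k ∈ Finset.Icc 1 N,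
        Real.exp (-(2 * C) * τ ^ 2 * L k ^ 2) ≤ (1 + τ • A k).det := by
      intro k hk
      obtain ⟨hk1, hkN⟩ := Finset.mem_Icc.mp hk
      have hc0 : 0 ≤ C * τ ^ 2 * L k ^ 2 := by positivity
      have hc2 : C * τ ^ 2 * L k ^ 2 ≤ 1/2 := hhalf k hk1 hkN
      have h1 : Real.exp (-(2 * (C * τ ^ 2 * L k ^ 2))) ≤ 1 - C * τ ^ 2 * L k ^ 2 :=
        exp_neg_two_le_one_sub hc0 hc2
      have h2 : 1 - C * τ ^ 2 * L k ^ 2 ≤ (1 + τ • A k).det := by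
        have := (abs_le.mp (hkey k hk)).1
        linarith
      have h3 : -(2 * C) * τ ^ 2 * L k ^ 2 = -(2 * (C * τ ^ 2 * L k ^ 2)) := by ring
      rw [h3]
      exact h1.trans h2
    calc Real.exp (-(2 * C) * τ ^ 2 * ∑ k ∈ Finset.Icc 1 N, L k ^ 2)
        = Real.exp (∑ k ∈ Finset.Icc 1 N, -(2 * C) * τ ^ 2 * L k ^ 2) := by
          rw [← Finset.mul_sum]
      _ = ∏ k ∈ Finset.Icc 1 N, Real.exp (-(2 * C) * τ ^ 2 * L k ^ 2) := Real.exp_sum _ _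
      _ ≤ ∏ k ∈ Finset.Icc 1 N, (1 + τ • A k).det :=
          Finset.prod_le_prod (fun k _ => (Real.exp_pos _).le) hlow
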